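/- Let ν be a non-degenerate probability measure on ℝ with support bounded from above and let α > 0. If ρ is a probability measure on ℝ whose K-transform satisfies K_ρ(z) = α K_ν(z) for all z in the upper half-plane ℂ⁺ (i.e. ρ = ν^{⊎α}, the boolean convolution power), then the support of ρ is bounded from above. -/

import Mathlib

open MeasureTheory Filter Topology Set

/-- The Cauchy transform of a measure on `ℝ`, at a complex argument:
`G_ν(z) = ∫ 1/(z-x) dν(x)`. -/
noncomputable def cauchyTC (ν : Measure ℝ) (z : ℂ) : ℂ := ∫ x, (z - (x : ℂ))⁻¹ ∂ν

/-- The K-transform (self-energy) `K_ν(z) = z - 1/G_ν(z)` at a complex argument. -/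
noncomputable def kTC (ν : Measure ℝ) (z : ℂ) : ℂ := z - (cauchyTC ν z)⁻¹

open Complex
open scoped ENNReal

lemma zmk_re (x y t : ℝ) : ((x : ℂ) + y * Complex.I - t).re = x - t := by simp
lemma zmk_im (x y t : ℝ) : ((x : ℂ) + y * Complex.I - t).im = y := by simp

lemma ker_re (x y t : ℝ) :
    (((x : ℂ) + y * Complex.I - t)⁻¹).re = (x - t) / ((x - t)^2 + y^2) := by
  rw [Complex.inv_re, Complex.normSq_apply, zmk_re, zmk_im]; ring_nf

lemma ker_im (x y t : ℝ) :
    (((x : ℂ) + y * Complex.I - t)⁻¹).im = -y / ((x - t)^2 + y^2) := by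
  rw [Complex.inv_im, Complex.normSq_apply, zmk_re, zmk_im]; ring_nf

lemma zmk_ne (x y t : ℝ) (hy : 0 < y) : (x : ℂ) + y * Complex.I - t ≠ 0 := by
  intro h
  have := congrArg Complex.im h
  rw [zmk_im] at this
  simp at this; linarith

lemma ker_norm_le (x y t : ℝ) (hy : 0 < y) :
    ‖((x : ℂ) + y * Complex.I - t)⁻¹‖ ≤ y⁻¹ := by
  rw [norm_inv]
  have h1 : y ≤ ‖(x : ℂ) + y * Complex.I - t‖ := by
    calc y = |((x:ℂ) + y * Complex.I - t).im| := by rw [zmk_im]; exact (abs_of_pos hy).symm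
    _ ≤ ‖(x:ℂ) + y * Complex.I - t‖ := Complex.abs_im_le_norm _
    _ = _ := rfl
  exact inv_anti₀ hy h1

lemma ker_integrable (μ : Measure ℝ) [IsFiniteMeasure μ] (x y : ℝ) (hy : 0 < y) :
    Integrable (fun t : ℝ => ((x : ℂ) + y * Complex.I - t)⁻¹) μ := by
  refine (integrable_const (y⁻¹)).mono' ?_ ?_
  · refine Continuous.aestronglyMeasurable ?_
    exact (Continuous.sub (by continuity) Complex.continuous_ofReal).inv₀ (fun t => zmk_ne x y t hy)
  · exact Eventually.of_forall fun t => ker_norm_le x y t hy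


lemma intRe (μ : Measure ℝ) [IsFiniteMeasure μ] (x y : ℝ) (hy : 0 < y) :
    Integrable (fun t : ℝ => (x - t)/((x - t)^2 + y^2)) μ := by
  refine (ker_integrable μ x y hy).re.congr (Eventually.of_forall fun t => ?_)
  simp only [RCLike.re_to_complex, ker_re]

lemma intIm (μ : Measure ℝ) [IsFiniteMeasure μ] (x y : ℝ) (hy : 0 < y) :
    Integrable (fun t : ℝ => y/((x - t)^2 + y^2)) μ := by
  refine ((ker_integrable μ x y hy).im.neg).congr (Eventually.of_forall fun t => ?_)
  simp only [Pi.neg_apply, RCLike.im_to_complex, ker_im]; ring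

lemma cauchy_re (μ : Measure ℝ) [IsFiniteMeasure μ] (x y : ℝ) (hy : 0 < y) :
    (cauchyTC μ ((x:ℂ) + y * Complex.I)).re = ∫ t, (x - t)/((x - t)^2 + y^2) ∂μ := by
  rw [cauchyTC]
  rw [← RCLike.re_to_complex, ← integral_re (ker_integrable μ x y hy)]
  exact integral_congr_ae (Eventually.of_forall fun t => by simp only [RCLike.re_to_complex, ker_re])

lemma cauchy_im (μ : Measure ℝ) [IsFiniteMeasure μ] (x y : ℝ) (hy : 0 < y) :
    (cauchyTC μ ((x:ℂ) + y * Complex.I)).im = - ∫ t, y/((x - t)^2 + y^2) ∂μ := by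
  rw [cauchyTC]
  rw [← RCLike.im_to_complex, ← integral_im (ker_integrable μ x y hy),
    ← integral_neg]
  exact integral_congr_ae (Eventually.of_forall fun t => by simp only [RCLike.im_to_complex, ker_im]; ring)

set_option maxHeartbeats 1600000 in
lemma core (ν ρ : Measure ℝ) [IsProbabilityMeasure ν] [IsProbabilityMeasure ρ]
    (b α M R : ℝ) (hα : 0 < α)
    (hb : ν (Set.Ioi b) = 0)
    (hMb : -M ≤ b)
    (hMm : (1/2 : ℝ≥0∞) ≤ ν (Icc (-M) b))
    (hK : ∀ z : ℂ, 0 < z.im → kTC ρ z = (α : ℂ) * kTC ν z)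
    (x y : ℝ)
    (hxc : max (α*b) b + 2 ≤ x) (hxR : x ≤ R)
    (hy : 0 < y) (hy1 : y ≤ 1)
    (hv : α*(R-b)^2*y^2 ≤ (4*(R+M))⁻¹) :
    (ρ (Ioo (x-y) (x+y))).toReal
      ≤ 2*(|1-α| + α/((4*(R+M))⁻¹)^2)*y^2 := by
  have hmax := le_max_right (α*b) b
  have hmax2 := le_max_left (α*b) b
  have hxb : b + 2 ≤ x := by linarith
  have hxab : α*b + 2 ≤ x := by linarith
  have hRb : b + 2 ≤ R := by linarith
  have hRM : 2 ≤ R + M := by linarith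
  set κ : ℝ := (4*(R+M))⁻¹ with hκdef
  have hκpos : 0 < κ := by rw [hκdef]; positivity
  -- a.e. bound on support of ν
  have haeb : ∀ᵐ t ∂ν, t ≤ b := by
    rw [ae_iff]
    convert hb using 2
    ext t; simp [Set.mem_Ioi]
  set r : ℝ := ∫ t, (x - t)/((x - t)^2 + y^2) ∂ν with hrdef
  set J : ℝ := ∫ t, y/((x - t)^2 + y^2) ∂ν with hIdef
  -- lower bound on r
  have hr_lo : κ ≤ r := by
    have hind : Integrable ((Icc (-M) b).indicator (fun _ => (2*(R+M))⁻¹)) ν :=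
      (integrable_const ((2*(R+M))⁻¹)).indicator measurableSet_Icc
    have hmono : ∫ t, (Icc (-M) b).indicator (fun _ => (2*(R+M))⁻¹) t ∂ν ≤ r := by
      refine integral_mono_ae hind (intRe ν x y hy) ?_
      filter_upwards [haeb] with t ht
      by_cases htI : t ∈ Icc (-M) b
      · rw [Set.indicator_of_mem htI]
        obtain ⟨ht1, ht2⟩ := htI
        have h1 : 1 ≤ x - t := by linarith
        have h2 : x - t ≤ R + M := by linarith
        have h3 : y^2 ≤ (x-t)^2 := by nlinarith
        have hpos : (0:ℝ) < (x-t)^2 + y^2 := by positivity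
        rw [le_div_iff₀ hpos]
        have hβ : (2*(R+M))⁻¹ * (2*(R+M)) = 1 := by
          apply inv_mul_cancel₀; positivity
        have hβpos : (0:ℝ) < (2*(R+M))⁻¹ := by positivity
        nlinarith [mul_le_mul_of_nonneg_left h2 (le_of_lt hβpos)]
      · rw [Set.indicator_of_notMem htI]
        have h1 : 0 ≤ x - t := by linarith
        positivity
    have hval : ∫ t, (Icc (-M) b).indicator (fun _ => (2*(R+M))⁻¹) t ∂ν
        = (ν (Icc (-M) b)).toReal * (2*(R+M))⁻¹ := by
      rw [integral_indicator_const _ measurableSet_Icc, smul_eq_mul, measureReal_def]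
    have hm : (1/2 : ℝ) ≤ (ν (Icc (-M) b)).toReal := by
      have := ENNReal.toReal_mono (measure_ne_top ν _) hMm
      simpa using this
    have : κ ≤ (ν (Icc (-M) b)).toReal * (2*(R+M))⁻¹ := by
      rw [hκdef]
      have hβpos : (0:ℝ) < (2*(R+M))⁻¹ := by positivity
      have h4 : (4*(R+M))⁻¹ = (1/2) * (2*(R+M))⁻¹ := by
        rw [show (1:ℝ)/2 = (2:ℝ)⁻¹ by norm_num, ← mul_inv]; congr 1; ring
      rw [h4]
      exact mul_le_mul_of_nonneg_right hm (le_of_lt hβpos)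
    linarith
  have hrpos : 0 < r := lt_of_lt_of_le hκpos hr_lo
  -- upper bound on r
  have hr_hi : r ≤ (x-b)⁻¹ := by
    have : r ≤ ∫ _t, (x-b)⁻¹ ∂ν := by
      refine integral_mono_ae (intRe ν x y hy) (integrable_const _) ?_
      filter_upwards [haeb] with t ht
      have h1 : (0:ℝ) < x - b := by linarith
      have h2 : 0 < x - t := by linarith
      calc (x - t)/((x - t)^2 + y^2) ≤ (x-t)/(x-t)^2 := by
            apply div_le_div_of_nonneg_left (le_of_lt h2) (by positivity)
            nlinarith
        _ = (x-t)⁻¹ := by field_simp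
        _ ≤ (x-b)⁻¹ := by apply inv_anti₀ h1; linarith
    simpa using this
  -- bounds on J
  have hI_lo : 0 ≤ J := by
    apply integral_nonneg
    intro t; positivity
  have hI_hi : J ≤ y := by
    have : J ≤ ∫ _t, y ∂ν := by
      refine integral_mono_ae (intIm ν x y hy) (integrable_const _) ?_
      filter_upwards [haeb] with t ht
      have h2 : (2:ℝ) ≤ x - t := by linarith
      calc y/((x - t)^2 + y^2) ≤ y/1 := by
            apply div_le_div_of_nonneg_left (le_of_lt hy) one_pos
            nlinarith
        _ = y := div_one y
    simpa using this
  -- the complex point z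
  set z : ℂ := (x:ℂ) + y * Complex.I with hzdef
  have hz : 0 < z.im := by simp [hzdef, hy]
  have hGre : (cauchyTC ν z).re = r := cauchy_re ν x y hy
  have hGim : (cauchyTC ν z).im = -J := cauchy_im ν x y hy
  set nsq : ℝ := r^2 + J^2 with hnsqdef
  have hnsq : 0 < nsq := by positivity
  have hnormSq : Complex.normSq (cauchyTC ν z) = nsq := by
    rw [Complex.normSq_apply, hGre, hGim, hnsqdef]; ring
  have hReGinv : ((cauchyTC ν z)⁻¹).re = r/nsq := by
    rw [Complex.inv_re, hGre, hnormSq]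
  have hImGinv : ((cauchyTC ν z)⁻¹).im = J/nsq := by
    rw [Complex.inv_im, hGim, hnormSq]; ring
  -- key real lower bound for r/nsq
  set u : ℝ := (x-b)⁻¹ with hudef
  set v : ℝ := y^2/κ with hvdef
  have hxbpos : (0:ℝ) < x - b := by linarith
  have hupos : 0 < u := by rw [hudef]; positivity
  have hvpos : 0 < v := by rw [hvdef]; positivity
  have hue : u * (x-b) = 1 := inv_mul_cancel₀ (ne_of_gt hxbpos)
  have hκv : κ * v = y^2 := by rw [hvdef]; field_simp
  have hstep : (x-b) - (x-b)^2*v ≤ r/nsq := by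
    have hJ2 : J^2 ≤ y^2 := by nlinarith [hI_lo, hI_hi]
    have s1 : r/(r^2+y^2) ≤ r/nsq := by
      have hle : nsq ≤ r^2 + y^2 := by rw [hnsqdef]; linarith
      exact div_le_div_of_nonneg_left (le_of_lt hrpos) hnsq hle
    have s2 : 1/(u+v) ≤ r/(r^2+y^2) := by
      rw [div_le_div_iff₀ (by positivity) (by positivity)]
      have h1 : r * u ≥ r^2 := by nlinarith
      have h2 : r * v ≥ y^2 := by nlinarith
      nlinarith
    have s3 : (x-b) - (x-b)^2*v ≤ 1/(u+v) := by
      rw [le_div_iff₀ (by positivity)]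
      have key : (x - b - (x - b)^2*v) * (u + v) = 1 - ((x-b)*v)^2 := by
        linear_combination (1 - (x-b)*v) * hue
      nlinarith [sq_nonneg ((x-b)*v), key]
    linarith
  -- hence the denominator has real part ≥ 1
  have hαe2v : α*((x-b)^2*v) ≤ 1 := by
    have h1 : (x-b)^2 ≤ (R-b)^2 := by nlinarith
    have h2 : α*(R-b)^2*v ≤ 1 := by
      have : α*(R-b)^2*v = (α*(R-b)^2*y^2)/κ := by rw [hvdef]; ring
      rw [this, div_le_one hκpos]; exact hv
    have h3 : (x-b)^2*v ≤ (R-b)^2*v := mul_le_mul_of_nonneg_right h1 (le_of_lt hvpos)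
    have h4 : α*((x-b)^2*v) ≤ α*((R-b)^2*v) := mul_le_mul_of_nonneg_left h3 (le_of_lt hα)
    linarith
  set D : ℂ := ((1-α : ℝ) : ℂ) * z + ((α:ℝ):ℂ) * (cauchyTC ν z)⁻¹ with hDdef
  have hDre : D.re = (1-α)*x + α*(r/nsq) := by
    rw [hDdef]
    simp [Complex.add_re, Complex.mul_re, Complex.ofReal_re, Complex.ofReal_im,
      hzdef, hReGinv]
    exact Or.inl (by rw [← Complex.inv_re]; exact hReGinv)
  have hDim : D.im = (1-α)*y + α*(J/nsq) := by
    rw [hDdef]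
    simp [Complex.add_im, Complex.mul_im, Complex.ofReal_re, Complex.ofReal_im,
      hzdef, hImGinv]
    exact Or.inl (by rw [← Complex.inv_im]; exact hImGinv)
  have hDre1 : 1 ≤ D.re := by
    rw [hDre]
    have : α*((x-b) - (x-b)^2*v) ≤ α*(r/nsq) :=
      mul_le_mul_of_nonneg_left hstep (le_of_lt hα)
    linarith
  -- relate to ρ via the K-transform identity
  have hGρinv : (cauchyTC ρ z)⁻¹ = D := by
    have hKz := hK z hz
    rw [kTC, kTC] at hKz
    rw [hDdef]
    push_cast
    linear_combination -hKz
  have hDne : D ≠ 0 := by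
    intro h
    rw [h] at hDre1
    simp only [Complex.zero_re] at hDre1
    linarith
  have hGρ : cauchyTC ρ z = D⁻¹ := by
    have hne : cauchyTC ρ z ≠ 0 := by
      intro h
      rw [h, inv_zero] at hGρinv
      exact hDne hGρinv.symm
    rw [← hGρinv, inv_inv]
  have hint : ∫ s, y/((x - s)^2 + y^2) ∂ρ = D.im / Complex.normSq D := by
    have h1 : (cauchyTC ρ z).im = - ∫ s, y/((x - s)^2 + y^2) ∂ρ := by
      rw [hzdef]; exact cauchy_im ρ x y hy
    rw [hGρ, Complex.inv_im, neg_div] at h1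
    linarith
  have hnormD1 : 1 ≤ Complex.normSq D := by
    rw [Complex.normSq_apply]
    have h1 : (1:ℝ)*1 ≤ D.re*D.re :=
      mul_le_mul hDre1 hDre1 (by norm_num) (le_trans zero_le_one hDre1)
    have h2 := mul_self_nonneg D.im
    linarith
  have hnormDpos : 0 < Complex.normSq D := lt_of_lt_of_le one_pos hnormD1
  have hκ2r : κ^2 ≤ nsq := by
    rw [hnsqdef]
    have h1 : κ^2 ≤ r^2 := pow_le_pow_left₀ (le_of_lt hκpos) hr_lo 2
    have h2 := sq_nonneg J
    linarith
  have hDim_abs : |D.im| ≤ (|1-α| + α/κ^2)*y := by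
    rw [hDim]
    have habs2 : |α*(J/nsq)| = α*(J/nsq) := by
      apply _root_.abs_of_nonneg
      have : 0 ≤ J/nsq := div_nonneg hI_lo (le_of_lt hnsq)
      positivity
    calc |(1-α)*y + α*(J/nsq)| ≤ |(1-α)*y| + |α*(J/nsq)| := abs_add_le _ _
      _ ≤ (|1-α|)*y + α*(y/κ^2) := by
          rw [abs_mul, _root_.abs_of_pos hy, habs2]
          have h5 : J/nsq ≤ y/κ^2 := div_le_div₀ (le_of_lt hy) hI_hi (by positivity) hκ2r
          have h6 : α*(J/nsq) ≤ α*(y/κ^2) := mul_le_mul_of_nonneg_left h5 (le_of_lt hα)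
          linarith
      _ = (|1-α| + α/κ^2)*y := by ring
  have hfin1 : D.im / Complex.normSq D ≤ |D.im| := by
    calc D.im / Complex.normSq D ≤ |D.im| / Complex.normSq D := by
          exact (div_le_div_iff_of_pos_right hnormDpos).2 (le_abs_self _)
      _ ≤ |D.im| / 1 := div_le_div_of_nonneg_left (abs_nonneg _) one_pos hnormD1
      _ = |D.im| := div_one _
  -- lower bound via indicator
  have hlow : (ρ (Ioo (x-y) (x+y))).toReal * (2*y)⁻¹ ≤ ∫ s, y/((x - s)^2 + y^2) ∂ρ := by
    have hind : Integrable ((Ioo (x-y) (x+y)).indicator (fun _ => (2*y)⁻¹)) ρ :=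
      (integrable_const ((2*y)⁻¹)).indicator measurableSet_Ioo
    have hmono : ∫ s, (Ioo (x-y) (x+y)).indicator (fun _ => (2*y)⁻¹) s ∂ρ
        ≤ ∫ s, y/((x - s)^2 + y^2) ∂ρ := by
      refine integral_mono hind (intIm ρ x y hy) (fun s => ?_)
      by_cases hs : s ∈ Ioo (x-y) (x+y)
      · rw [Set.indicator_of_mem hs]
        obtain ⟨hs1, hs2⟩ := hs
        have h3 : (x-s)^2 ≤ y^2 := sq_le_sq' (by linarith) (by linarith)
        have hpos : (0:ℝ) < (x-s)^2 + y^2 := by positivity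
        rw [le_div_iff₀ hpos]
        have hγpos : (0:ℝ) < (2*y)⁻¹ := by positivity
        have e1 : (2*y)⁻¹ * ((x-s)^2 + y^2) ≤ (2*y)⁻¹ * (2*y^2) :=
          mul_le_mul_of_nonneg_left (by linarith) (le_of_lt hγpos)
        have e2 : (2*y)⁻¹ * (2*y^2) = y := by field_simp
        linarith
      · rw [Set.indicator_of_notMem hs]
        positivity
    have hval : ∫ s, (Ioo (x-y) (x+y)).indicator (fun _ => (2*y)⁻¹) s ∂ρ
        = (ρ (Ioo (x-y) (x+y))).toReal * (2*y)⁻¹ := by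
      rw [integral_indicator_const _ measurableSet_Ioo, smul_eq_mul, measureReal_def]
    linarith
  -- combine
  have hmain : (ρ (Ioo (x-y) (x+y))).toReal * (2*y)⁻¹ ≤ (|1-α| + α/κ^2)*y := by
    rw [hint] at hlow
    linarith
  have h2y : (0:ℝ) < 2*y := by linarith
  calc (ρ (Ioo (x-y) (x+y))).toReal
      = ((ρ (Ioo (x-y) (x+y))).toReal * (2*y)⁻¹)*(2*y) := by
        rw [mul_assoc, inv_mul_cancel₀ (ne_of_gt h2y), mul_one]
    _ ≤ ((|1-α| + α/κ^2)*y)*(2*y) := mul_le_mul_of_nonneg_right hmain (le_of_lt h2y)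
    _ = 2*(|1-α| + α/κ^2)*y^2 := by ring

lemma cover (c R y : ℝ) (hy : 0 < y) (hcR : c ≤ R) :
    Icc c R ⊆ ⋃ k ∈ Finset.range (⌈(R - c)/y⌉₊ + 1), Ioo (c + k*y - y) (c + k*y + y) := by
  intro s hs
  obtain ⟨h1, h2⟩ := hs
  have hu0 : 0 ≤ (s - c)/y := div_nonneg (by linarith) (le_of_lt hy)
  have hk1 : (⌊(s - c)/y⌋₊ : ℝ) ≤ (s - c)/y := Nat.floor_le hu0
  have hk2 : (s - c)/y < ⌊(s - c)/y⌋₊ + 1 := Nat.lt_floor_add_one _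
  simp only [Set.mem_iUnion, Finset.mem_range, Set.mem_Ioo]
  refine ⟨⌊(s - c)/y⌋₊, ?_, ?_, ?_⟩
  · have ha : ⌊(s - c)/y⌋₊ ≤ ⌊(R - c)/y⌋₊ :=
      Nat.floor_le_floor (by gcongr)
    have hb' : ⌊(R - c)/y⌋₊ ≤ ⌈(R - c)/y⌉₊ := Nat.floor_le_ceil _
    omega
  · have h3 : (⌊(s - c)/y⌋₊ : ℝ)*y ≤ s - c := (le_div_iff₀ hy).1 hk1
    linarith
  · have h4 : s - c < ((⌊(s - c)/y⌋₊ : ℝ)+1)*y := (div_lt_iff₀ hy).1 hk2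
    linarith

set_option maxHeartbeats 1600000 in
/-- if `ν` is a non-degenerate probability measure with support bounded
from above, `α > 0`, and `ρ` is a probability measure whose K-transform satisfies
`K_ρ = α K_ν` on the upper half-plane (i.e. `ρ = ν^{⊎α}` is the boolean convolution
power), then the support of `ρ` is bounded from above. -/
theorem boolean_power_support_bddAbove
    (ν ρ : Measure ℝ) [IsProbabilityMeasure ν] [IsProbabilityMeasure ρ]
    (hnd : ∀ a : ℝ, ν ≠ Measure.dirac a)
    (b : ℝ) (hb : ν (Set.Ioi b) = 0)
    (α : ℝ) (hα : 0 < α)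
    (hK : ∀ z : ℂ, 0 < z.im → kTC ρ z = (α : ℂ) * kTC ν z) :
    ∃ c : ℝ, ρ (Set.Ioi c) = 0 := by
  -- choose M with ν(Icc (-M) b) ≥ 1/2
  obtain ⟨M, hMb, hMm⟩ : ∃ M : ℝ, -M ≤ b ∧ (1/2 : ℝ≥0∞) ≤ ν (Icc (-M) b) := by
    have hmono : Monotone (fun n : ℕ => Icc (-(|b| + (n:ℝ))) b) := by
      intro m n hmn t ht
      obtain ⟨h1, h2⟩ := ht
      have : (m:ℝ) ≤ n := Nat.cast_le.2 hmn
      exact ⟨by linarith, h2⟩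
    have htend := MeasureTheory.tendsto_measure_iUnion_atTop (μ := ν) hmono
    have hunion : ⋃ n : ℕ, Icc (-(|b| + (n:ℝ))) b = Iic b := by
      ext t
      simp only [Set.mem_iUnion, Set.mem_Icc, Set.mem_Iic]
      constructor
      · rintro ⟨n, h1, h2⟩; exact h2
      · intro ht
        refine ⟨⌈-t - |b|⌉₊, ?_, ht⟩
        have := Nat.le_ceil (-t - |b|)
        linarith
    rw [hunion] at htend
    have hIic : ν (Iic b) = 1 := by
      have hcompl : Iic b = (Ioi b)ᶜ := by ext t; simp
      rw [hcompl, measure_compl measurableSet_Ioi (measure_ne_top _ _), hb]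
      simp
    rw [hIic] at htend
    have hlt : (1/2 : ℝ≥0∞) < 1 := by norm_num
    have hev : ∀ᶠ n : ℕ in atTop, (1/2 : ℝ≥0∞) < ν (Icc (-(|b| + (n:ℝ))) b) :=
      htend.eventually (eventually_gt_nhds hlt)
    obtain ⟨n, hn⟩ := hev.exists
    refine ⟨|b| + n, ?_, le_of_lt hn⟩
    have h1 := abs_nonneg b
    have h2 := neg_abs_le b
    have h3 : (0:ℝ) ≤ (n:ℝ) := n.cast_nonneg
    linarith
  set c : ℝ := max (α*b) b + 2 with hcdef
  have hclaim : ∀ R : ℝ, c ≤ R → ρ (Icc c R) = 0 := by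
    intro R hcR
    have hmax := le_max_right (α*b) b
    have hmax2 := le_max_left (α*b) b
    have hbc : b + 2 ≤ c := by rw [hcdef]; linarith
    have hbR : b + 2 ≤ R := le_trans hbc hcR
    set R' : ℝ := R + 1 with hR'def
    set κ : ℝ := (4*(R'+M))⁻¹ with hκdef
    have hR'M : 0 < R' + M := by rw [hR'def]; linarith
    have hκpos : 0 < κ := by rw [hκdef]; positivity
    set C : ℝ := |1-α| + α/κ^2 with hCdef
    have hCpos : 0 < C := by
      rw [hCdef]
      have : 0 < α/κ^2 := by positivity
      have := abs_nonneg (1-α)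
      linarith
    set y₀ : ℝ := min 1 (Real.sqrt (κ / (α*(R'-b)^2 + 1))) with hy₀def
    have hsarg : 0 < κ / (α*(R'-b)^2 + 1) := by
      have : (0:ℝ) < α*(R'-b)^2 + 1 := by positivity
      positivity
    have hy₀pos : 0 < y₀ := lt_min one_pos (Real.sqrt_pos.2 hsarg)
    have hbound : ∀ y : ℝ, 0 < y → y ≤ y₀ →
        (ρ (Icc c R)).toReal ≤ (2*C*(R'-c) + 4*C)*y := by
      intro y hy hyy₀
      have hy1 : y ≤ 1 := le_trans hyy₀ (min_le_left _ _)
      have hv : α*(R'-b)^2*y^2 ≤ κ := by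
        have h1 : y ≤ Real.sqrt (κ/(α*(R'-b)^2 + 1)) := le_trans hyy₀ (min_le_right _ _)
        have h2 : y^2 ≤ κ/(α*(R'-b)^2 + 1) := by
          have h3 := Real.sq_sqrt (le_of_lt hsarg)
          nlinarith [Real.sqrt_nonneg (κ/(α*(R'-b)^2 + 1))]
        have hq : (0:ℝ) ≤ α*(R'-b)^2 := by positivity
        have h3 : α*(R'-b)^2*y^2 ≤ α*(R'-b)^2*(κ/(α*(R'-b)^2 + 1)) :=
          mul_le_mul_of_nonneg_left h2 hq
        have h4 : α*(R'-b)^2*(κ/(α*(R'-b)^2 + 1)) ≤ κ := by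
          rw [mul_div_assoc', div_le_iff₀ (by positivity)]
          linarith [hκpos]
        exact le_trans h3 h4
      set n := ⌈(R - c)/y⌉₊ with hndef
      have hsub : ρ (Icc c R) ≤ ∑ k ∈ Finset.range (n+1), ρ (Ioo (c+k*y-y) (c+k*y+y)) :=
        le_trans (measure_mono (cover c R y hy hcR)) (measure_biUnion_finset_le _ _)
      have hceil : (n:ℝ) < (R-c)/y + 1 := by
        rw [hndef]
        exact Nat.ceil_lt_add_one (div_nonneg (by linarith) hy.le)
      have hdivy : ((R-c)/y)*y = R - c := div_mul_cancel₀ _ (ne_of_gt hy)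
      have heach : ∀ k ∈ Finset.range (n+1),
          ρ (Ioo (c+k*y-y) (c+k*y+y)) ≤ ENNReal.ofReal (2*C*y^2) := by
        intro k hk
        have hkn : (k:ℝ) ≤ (n:ℝ) := by
          exact_mod_cast Nat.lt_succ_iff.1 (Finset.mem_range.1 hk)
        have hky : (0:ℝ) ≤ (k:ℝ)*y := by positivity
        have hxk1 : max (α*b) b + 2 ≤ c + k*y := by rw [hcdef]; linarith
        have hxk2 : c + (k:ℝ)*y ≤ R' := by
          have h5 : (k:ℝ)*y ≤ ((R-c)/y + 1)*y :=
            mul_le_mul_of_nonneg_right (by linarith) hy.le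
          have h6 : ((R-c)/y + 1)*y = (R - c) + y := by rw [add_mul, hdivy, one_mul]
          rw [hR'def, hcdef]
          rw [hcdef] at hcR
          linarith
        have hcore := core ν ρ b α M R' hα hb hMb hMm hK (c+k*y) y hxk1 hxk2 hy hy1 hv
        have hcore2 : (ρ (Ioo (c+k*y-y) (c+k*y+y))).toReal ≤ 2*C*y^2 := by
          rw [hCdef, hκdef]
          exact hcore
        exact (ENNReal.le_ofReal_iff_toReal_le (measure_ne_top _ _) (by positivity)).2 hcore2
      have hsum : ∑ k ∈ Finset.range (n+1), ρ (Ioo (c+k*y-y) (c+k*y+y))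
          ≤ (n+1) • ENNReal.ofReal (2*C*y^2) := by
        have := Finset.sum_le_card_nsmul (Finset.range (n+1)) _ _ heach
        simpa using this
      have hle : ρ (Icc c R) ≤ ((n:ℝ≥0∞)+1) * ENNReal.ofReal (2*C*y^2) := by
        refine le_trans hsub (le_trans hsum ?_)
        rw [nsmul_eq_mul]
        push_cast
        exact le_rfl
      have hfin : ((n:ℝ≥0∞)+1) * ENNReal.ofReal (2*C*y^2) ≠ ⊤ :=
        ENNReal.mul_ne_top (by simp) ENNReal.ofReal_ne_top
      have hreal : (ρ (Icc c R)).toReal ≤ ((n:ℝ)+1) * (2*C*y^2) := by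
        have h7 := ENNReal.toReal_mono hfin hle
        rw [ENNReal.toReal_mul, ENNReal.toReal_ofReal (by positivity)] at h7
        have h8 : ((n:ℝ≥0∞)+1).toReal = (n:ℝ)+1 := by
          rw [ENNReal.toReal_add (by simp) (by simp)]
          simp
        rw [h8] at h7
        exact h7
      have e1 : ((n:ℝ)+1) * (2*C*y^2) ≤ ((R-c)/y + 2) * (2*C*y^2) :=
        mul_le_mul_of_nonneg_right (by linarith) (by positivity)
      have e2 : ((R-c)/y + 2) * (2*C*y^2) = 2*C*(R-c)*y + 4*C*y^2 := by
        have : ((R-c)/y)*(2*C*y^2) = 2*C*(R-c)*y := by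
          field_simp
        rw [add_mul, this]
        ring
      have e3 : 4*C*y^2 ≤ 4*C*y := by
        have h9 : y^2 ≤ y := by nlinarith
        nlinarith
      have e4 : 2*C*(R-c)*y ≤ 2*C*(R'-c)*y := by
        have h10 : R - c ≤ R' - c := by rw [hR'def]; linarith
        have h11 : (0:ℝ) ≤ 2*C*y := by positivity
        nlinarith
      calc (ρ (Icc c R)).toReal ≤ ((n:ℝ)+1) * (2*C*y^2) := hreal
        _ ≤ ((R-c)/y + 2) * (2*C*y^2) := e1
        _ = 2*C*(R-c)*y + 4*C*y^2 := e2
        _ ≤ 2*C*(R'-c)*y + 4*C*y := add_le_add e4 e3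
        _ = (2*C*(R'-c) + 4*C)*y := by ring
    -- let y → 0
    set A := 2*C*(R'-c) + 4*C with hAdef
    have hApos : 0 < A := by
      rw [hAdef]
      have h12 : (0:ℝ) ≤ R' - c := by rw [hR'def]; linarith
      have h13 : 0 ≤ 2*C*(R'-c) := by positivity
      linarith
    by_contra hne
    have hvpos : 0 < (ρ (Icc c R)).toReal :=
      ENNReal.toReal_pos hne (measure_ne_top _ _)
    set y := min y₀ ((ρ (Icc c R)).toReal/(2*A)) with hydef
    have hy : 0 < y := lt_min hy₀pos (by positivity)
    have h14 := hbound y hy (min_le_left _ _)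
    have h15 : A * y ≤ A * ((ρ (Icc c R)).toReal/(2*A)) :=
      mul_le_mul_of_nonneg_left (min_le_right _ _) hApos.le
    have h16 : A * ((ρ (Icc c R)).toReal/(2*A)) = (ρ (Icc c R)).toReal/2 := by
      field_simp
    have h17 : (ρ (Icc c R)).toReal ≤ (ρ (Icc c R)).toReal / 2 :=
      le_trans h14 (le_trans h15 (le_of_eq h16))
    exact absurd h17 (not_le.2 (half_lt_self hvpos))
  refine ⟨c, ?_⟩
  have hsub : Ioi c ⊆ ⋃ n : ℕ, Icc c (c + (n:ℝ)) := by
    intro s hs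
    simp only [Set.mem_iUnion, Set.mem_Icc]
    refine ⟨⌈s - c⌉₊, le_of_lt hs, ?_⟩
    have := Nat.le_ceil (s - c)
    linarith
  refine measure_mono_null hsub (measure_iUnion_null fun n => hclaim _ ?_)
  have : (0:ℝ) ≤ (n:ℝ) := n.cast_nonneg
  linarith
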